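/- For any real λ ≥ k ≥ 0 with k an integer, a Poisson random variable N with mean λ satisfies P(N ≥ k) > 1/2. -/

import Mathlib

open ProbabilityTheory Real

/-- Key factorial inequality: for `j < k`, `(k+j)! ≤ k^(2j+1) * (k-1-j)!`. -/
lemma stmt18_fact_le (k : ℕ) : ∀ j : ℕ, j < k → (k + j).factorial ≤ k ^ (2 * j + 1) * (k - 1 - j).factorial := by
  intro j
  induction j with
  | zero =>
    intro hk
    have h := Nat.mul_factorial_pred hk.ne'
    simpa [pow_one] using h.ge
  | succ j ih =>
    intro hj
    have ih' := ih (by omega)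
    have h1 : k - 1 - j = (k - 1 - (j + 1)) + 1 := by omega
    have key : (k + j + 1) * (k - 1 - (j + 1) + 1) ≤ k * k := by
      obtain ⟨m, hm⟩ : ∃ m, k = m + (j + 1) + 1 := ⟨k - j - 2, by omega⟩
      subst hm
      have : (m + (j + 1) + 1) - 1 - (j + 1) + 1 = m + 1 := by omega
      rw [this]
      nlinarith [Nat.zero_le m, Nat.zero_le j]
    calc (k + (j + 1)).factorial = (k + j + 1) * (k + j).factorial := by
          rw [show k + (j + 1) = (k + j) + 1 by ring, Nat.factorial_succ]
      _ ≤ (k + j + 1) * (k ^ (2 * j + 1) * (k - 1 - j).factorial) :=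
          Nat.mul_le_mul_left _ ih'
      _ = (k + j + 1) * (k ^ (2 * j + 1) * ((k - 1 - (j + 1) + 1) * (k - 1 - (j + 1)).factorial)) := by
          rw [h1, Nat.factorial_succ]
      _ = ((k + j + 1) * (k - 1 - (j + 1) + 1)) * (k ^ (2 * j + 1) * (k - 1 - (j + 1)).factorial) := by
          ring
      _ ≤ (k * k) * (k ^ (2 * j + 1) * (k - 1 - (j + 1)).factorial) :=
          Nat.mul_le_mul_right _ key
      _ = k ^ (2 * (j + 1) + 1) * (k - 1 - (j + 1)).factorial := by ring

/-- Termwise comparison: `p(k-1-j) ≤ p(k+j)` for `j < k` when `k ≤ λ`. -/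
lemma stmt18_term_le (lam : NNReal) (hlam : 0 < lam) (k : ℕ) (hk : (k : ℝ) ≤ lam)
    (j : ℕ) (hj : j < k) :
    poissonPMFReal lam (k - 1 - j) ≤ poissonPMFReal lam (k + j) := by
  unfold poissonPMFReal
  have hlam' : (0 : ℝ) < lam := by exact_mod_cast hlam
  have hf1 : (0 : ℝ) < (k - 1 - j).factorial := by exact_mod_cast Nat.factorial_pos _
  have hf2 : (0 : ℝ) < (k + j).factorial := by exact_mod_cast Nat.factorial_pos _
  rw [div_le_div_iff₀ hf1 hf2]
  have hexp : (0 : ℝ) < Real.exp (-lam) := Real.exp_pos _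
  have hfact : ((k + j).factorial : ℝ) ≤ (k : ℝ) ^ (2 * j + 1) * (k - 1 - j).factorial := by
    have := stmt18_fact_le k j hj
    calc ((k + j).factorial : ℝ) ≤ ((k ^ (2 * j + 1) * (k - 1 - j).factorial : ℕ) : ℝ) := by
          exact_mod_cast this
      _ = (k : ℝ) ^ (2 * j + 1) * (k - 1 - j).factorial := by push_cast; ring
  have hpow : (k : ℝ) ^ (2 * j + 1) ≤ (lam : ℝ) ^ (2 * j + 1) :=
    pow_le_pow_left₀ (by positivity) hk _
  have hsplit : (lam : ℝ) ^ (k + j) = (lam : ℝ) ^ (k - 1 - j) * (lam : ℝ) ^ (2 * j + 1) := by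
    rw [← pow_add]
    congr 1
    omega
  have hterm : ((k + j).factorial : ℝ) ≤ (lam : ℝ) ^ (2 * j + 1) * (k - 1 - j).factorial :=
    hfact.trans (mul_le_mul_of_nonneg_right hpow hf1.le)
  calc Real.exp (-lam) * (lam : ℝ) ^ (k - 1 - j) * (k + j).factorial
      ≤ Real.exp (-lam) * (lam : ℝ) ^ (k - 1 - j) * ((lam : ℝ) ^ (2 * j + 1) * (k - 1 - j).factorial) := by
        exact mul_le_mul_of_nonneg_left hterm (by positivity)
    _ = Real.exp (-lam) * (lam : ℝ) ^ (k + j) * (k - 1 - j).factorial := by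
        rw [hsplit]; ring

set_option maxHeartbeats 1000000 in
/-- If `N` is Poisson with mean `λ ≥ k`, then `P(N ≥ k) > 1/2`.
The tail `P(N ≥ k)` is written as `∑_{n ≥ 0} P(N = k + n)`. -/
theorem stmt18 (lam : NNReal) (hlam : 0 < lam) (k : ℕ) (hk : (k : ℝ) ≤ lam) :
    (1 : ℝ) / 2 < ∑' n : ℕ, poissonPMFReal lam (k + n) := by
  set p := poissonPMFReal lam with hp
  have hsum : HasSum p 1 := poissonPMFRealSum lam
  have hsummable : Summable p := hsum.summable
  have hpos : ∀ n, 0 < p n := fun n => poissonPMFReal_pos hlam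
  -- tail as shifted tsum
  have hshift : (∑' n : ℕ, p (k + n)) = ∑' n : ℕ, p (n + k) := by
    apply tsum_congr; intro n; rw [Nat.add_comm]
  have hsummable_shift : Summable fun n => p (n + k) := (summable_nat_add_iff k).2 hsummable
  have hsplit : (∑ i ∈ Finset.range k, p i) + ∑' n : ℕ, p (n + k) = 1 := by
    rw [Summable.sum_add_tsum_nat_add k hsummable, hsum.tsum_eq]
  -- head sum reflected
  have hrefl : (∑ i ∈ Finset.range k, p i) = ∑ j ∈ Finset.range k, p (k - 1 - j) :=
    (Finset.sum_range_reflect p k).symm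
  have hle : (∑ j ∈ Finset.range k, p (k - 1 - j)) ≤ ∑ j ∈ Finset.range k, p (k + j) := by
    apply Finset.sum_le_sum
    intro j hj
    exact stmt18_term_le lam hlam k hk j (Finset.mem_range.1 hj)
  -- tail strictly exceeds its first k terms
  have hsummable_shift2 : Summable fun n => p (n + k + k) := (summable_nat_add_iff k).2 hsummable_shift
  have hsplit2 : (∑ j ∈ Finset.range k, p (j + k)) + ∑' n : ℕ, p (n + k + k) = ∑' n : ℕ, p (n + k) :=
    Summable.sum_add_tsum_nat_add k hsummable_shift
  have htailpos : 0 < ∑' n : ℕ, p (n + k + k) :=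
    Summable.tsum_pos hsummable_shift2 (fun n => (hpos _).le) 0 (hpos _)
  have hcomm : (∑ j ∈ Finset.range k, p (j + k)) = ∑ j ∈ Finset.range k, p (k + j) := by
    apply Finset.sum_congr rfl; intro j _; rw [Nat.add_comm]
  have hlt : (∑ i ∈ Finset.range k, p i) < ∑' n : ℕ, p (n + k) := by
    rw [hrefl]
    calc (∑ j ∈ Finset.range k, p (k - 1 - j)) ≤ ∑ j ∈ Finset.range k, p (k + j) := hle
      _ = ∑ j ∈ Finset.range k, p (j + k) := hcomm.symm
      _ < ∑' n : ℕ, p (n + k) := by linarith [hsplit2, htailpos]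
  rw [hshift]
  linarith [hsplit, hlt]
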